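/- Under the frame setup on ℝ_t × ℝ²_x with S, v of class C³ and φ : ℝ × ℝ² → ℝ of class C², suppose S satisfies the Ishimori evolution equation ∂_t S = S × (∂₁² S − ∂₂² S) + κ ( ∂₁φ · ∂₁ S + ∂₂φ · ∂₂ S ) pointwise for some κ ∈ ℝ. Then for each m ∈ {1,2} one has the pointwise covariant Schrödinger equation i D_t ψ_m = − ( D₁ D₁ ψ_m − D₂ D₂ ψ_m ) − i ( q_{m1} ψ₁ − q_{m2} ψ₂ ) + i κ ( ∂₁φ · D_m ψ₁ + ∂₂φ · D_m ψ₂ + ψ₁ ∂_m ∂₁ φ + ψ₂ ∂_m ∂₂ φ ), where q_{αβ} := Im( ψ_α · conj(ψ_β) ). -/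

import Mathlib

open Matrix

/-- The time direction in `ℝ_t × ℝ²_x`. -/
def et : ℝ × ℝ × ℝ := (1, 0, 0)
/-- The first spatial direction in `ℝ_t × ℝ²_x`. -/
def e1 : ℝ × ℝ × ℝ := (0, 1, 0)
/-- The second spatial direction in `ℝ_t × ℝ²_x`. -/
def e2 : ℝ × ℝ × ℝ := (0, 0, 1)

/-- Partial derivative of `f` in direction `e`. -/
noncomputable def pd3 {E : Type*} [NormedAddCommGroup E] [NormedSpace ℝ E]
    (f : ℝ × ℝ × ℝ → E) (e : ℝ × ℝ × ℝ) (p : ℝ × ℝ × ℝ) : E :=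
  fderiv ℝ f p e

/-- The complexified differentiated field `ψ_α = ⟨v, ∂_α S⟩ + i ⟨w, ∂_α S⟩`. -/
noncomputable def framePsi (S v w : ℝ × ℝ × ℝ → Fin 3 → ℝ) (e p : ℝ × ℝ × ℝ) : ℂ :=
  ((v p ⬝ᵥ pd3 S e p : ℝ) : ℂ) + Complex.I * ((w p ⬝ᵥ pd3 S e p : ℝ) : ℂ)

/-- The real connection coefficient `A_α = ⟨w, ∂_α v⟩`. -/
noncomputable def frameA (v w : ℝ × ℝ × ℝ → Fin 3 → ℝ) (e p : ℝ × ℝ × ℝ) : ℝ :=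
  w p ⬝ᵥ pd3 v e p

/-- The covariant derivative `D_α f = ∂_α f + i A_α f`. -/
noncomputable def Dcov (A : ℝ × ℝ × ℝ → ℝ) (f : ℝ × ℝ × ℝ → ℂ) (e p : ℝ × ℝ × ℝ) : ℂ :=
  fderiv ℝ f p e + Complex.I * (A p : ℂ) * f p

/-- The curvature `q_{αβ} = Im(ψ_α conj(ψ_β))`. -/
noncomputable def frameQ (S v w : ℝ × ℝ × ℝ → Fin 3 → ℝ) (eα eβ p : ℝ × ℝ × ℝ) : ℝ :=
  (framePsi S v w eα p * (starRingEnd ℂ) (framePsi S v w eβ p)).im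

namespace CSIaux

abbrev E3 := ℝ × ℝ × ℝ
abbrev V3 := Fin 3 → ℝ

lemma contDiff_coord {n : WithTop ℕ∞} {f : E3 → V3} (hf : ContDiff ℝ n f) (i : Fin 3) :
    ContDiff ℝ n fun q => f q i := contDiff_pi.1 hf i

lemma diffAt_coord {f : E3 → V3} {p : E3} (hf : DifferentiableAt ℝ f p) (i : Fin 3) :
    DifferentiableAt ℝ (fun q => f q i) p := differentiableAt_pi.1 hf i

lemma pd3_coord {f : E3 → V3} {p : E3} (hf : DifferentiableAt ℝ f p) (e : E3) (i : Fin 3) :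
    pd3 f e p i = fderiv ℝ (fun q => f q i) p e := by
  have h := fderiv_pi (𝕜 := ℝ) (φ := fun i q => f q i) (x := p) (fun i => diffAt_coord hf i)
  have : fderiv ℝ f p = ContinuousLinearMap.pi fun i => fderiv ℝ (fun q => f q i) p := h
  simp [pd3, this]

lemma contDiff_pd3 {F : Type*} [NormedAddCommGroup F] [NormedSpace ℝ F]
    {m n : WithTop ℕ∞} {f : E3 → F} (hf : ContDiff ℝ n f) (h : m + 1 ≤ n) (e : E3) :
    ContDiff ℝ m (pd3 f e) :=
  (hf.fderiv_right h).clm_apply contDiff_const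

lemma contDiff_dot {n : WithTop ℕ∞} {f g : E3 → V3} (hf : ContDiff ℝ n f) (hg : ContDiff ℝ n g) :
    ContDiff ℝ n (fun q => f q ⬝ᵥ g q) := by
  have : (fun q => f q ⬝ᵥ g q) = fun q =>
      f q 0 * g q 0 + (f q 1 * g q 1 + f q 2 * g q 2) := by
    funext q; simp [dotProduct, Fin.sum_univ_three]; ring
  rw [this]
  exact ((contDiff_coord hf 0).mul (contDiff_coord hg 0)).add
    (((contDiff_coord hf 1).mul (contDiff_coord hg 1)).add
      ((contDiff_coord hf 2).mul (contDiff_coord hg 2)))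

lemma pd3_dot {f g : E3 → V3} {p : E3} (hf : DifferentiableAt ℝ f p)
    (hg : DifferentiableAt ℝ g p) (e : E3) :
    pd3 (fun q => f q ⬝ᵥ g q) e p = pd3 f e p ⬝ᵥ g p + f p ⬝ᵥ pd3 g e p := by
  have hfe : ∀ i, DifferentiableAt ℝ (fun q => f q i) p := diffAt_coord hf
  have hge : ∀ i, DifferentiableAt ℝ (fun q => g q i) p := diffAt_coord hg
  have h : (fun q => f q ⬝ᵥ g q) = fun q =>
      f q 0 * g q 0 + (f q 1 * g q 1 + f q 2 * g q 2) := by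
    funext q; simp [dotProduct, Fin.sum_univ_three]; ring
  rw [h]
  simp only [pd3]
  rw [fderiv_fun_add (((hfe 0).fun_mul (hge 0)))
      (((hfe 1).fun_mul (hge 1)).fun_add ((hfe 2).fun_mul (hge 2))),
    fderiv_fun_add ((hfe 1).fun_mul (hge 1)) ((hfe 2).fun_mul (hge 2)),
    fderiv_fun_mul (hfe 0) (hge 0), fderiv_fun_mul (hfe 1) (hge 1), fderiv_fun_mul (hfe 2) (hge 2)]
  have hcf : ∀ i, fderiv ℝ (fun q => f q i) p e = fderiv ℝ f p e i :=
    fun i => (pd3_coord hf e i).symm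
  have hcg : ∀ i, fderiv ℝ (fun q => g q i) p e = fderiv ℝ g p e i :=
    fun i => (pd3_coord hg e i).symm
  simp [dotProduct, Fin.sum_univ_three, hcf, hcg]
  ring

end CSIaux

namespace CSIaux

lemma pd3_add {F : Type*} [NormedAddCommGroup F] [NormedSpace ℝ F] {f g : E3 → F} {p : E3}
    (hf : DifferentiableAt ℝ f p) (hg : DifferentiableAt ℝ g p) (e : E3) :
    pd3 (fun q => f q + g q) e p = pd3 f e p + pd3 g e p := by
  simp [pd3, fderiv_fun_add hf hg]

lemma pd3_sub {F : Type*} [NormedAddCommGroup F] [NormedSpace ℝ F] {f g : E3 → F} {p : E3}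
    (hf : DifferentiableAt ℝ f p) (hg : DifferentiableAt ℝ g p) (e : E3) :
    pd3 (fun q => f q - g q) e p = pd3 f e p - pd3 g e p := by
  simp [pd3, fderiv_fun_sub hf hg]

lemma pd3_cmul {f : E3 → ℂ} {p : E3} (hf : DifferentiableAt ℝ f p) (c : ℂ) (e : E3) :
    pd3 (fun q => c * f q) e p = c * pd3 f e p := by
  simp [pd3, fderiv_const_mul hf c]

lemma pd3_mul {f g : E3 → ℂ} {p : E3} (hf : DifferentiableAt ℝ f p)
    (hg : DifferentiableAt ℝ g p) (e : E3) :
    pd3 (fun q => f q * g q) e p = f p * pd3 g e p + g p * pd3 f e p := by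
  simp [pd3, fderiv_fun_mul hf hg, smul_eq_mul]

lemma pd3_ofReal {g : E3 → ℝ} {p : E3} (hg : DifferentiableAt ℝ g p) (e : E3) :
    pd3 (fun q => ((g q : ℝ) : ℂ)) e p = ((pd3 g e p : ℝ) : ℂ) := by
  have := (Complex.ofRealCLM.hasFDerivAt.comp p hg.hasFDerivAt).fderiv
  simp only [pd3]
  rw [show (fun q => ((g q : ℝ) : ℂ)) = Complex.ofRealCLM ∘ g from rfl, this]
  rfl

lemma contDiff_ofReal {n : WithTop ℕ∞} {g : E3 → ℝ} (hg : ContDiff ℝ n g) :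
    ContDiff ℝ n (fun q => ((g q : ℝ) : ℂ)) :=
  Complex.ofRealCLM.contDiff.comp hg

lemma pd3_pd3_comm {F : Type*} [NormedAddCommGroup F] [NormedSpace ℝ F]
    {f : E3 → F} (hf : ContDiff ℝ 2 f) (α β : E3) (p : E3) :
    pd3 (pd3 f α) β p = pd3 (pd3 f β) α p := by
  have hdf : Differentiable ℝ (fderiv ℝ f) :=
    (hf.fderiv_right (m := 1) (by norm_num)).differentiable (by norm_num)
  have key : ∀ γ : E3, fderiv ℝ (fun q => fderiv ℝ f q γ) p =
      (fderiv ℝ (fderiv ℝ f) p).flip γ := by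
    intro γ
    have h1 : HasFDerivAt (fderiv ℝ f) (fderiv ℝ (fderiv ℝ f) p) p :=
      (hdf p).hasFDerivAt
    have h2 := ((ContinuousLinearMap.apply ℝ F γ).hasFDerivAt.comp p h1).fderiv
    have : (fun q => fderiv ℝ f q γ) =
        (ContinuousLinearMap.apply ℝ F γ) ∘ (fderiv ℝ f) := rfl
    rw [this, h2]
    rfl
  have hsym := second_derivative_symmetric (f := f) (f' := fderiv ℝ f)
    (f'' := fderiv ℝ (fderiv ℝ f) p) (x := p)
    (fun y => ((hf.differentiable (by norm_num)) y).hasFDerivAt)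
    ((hdf p).hasFDerivAt) β α
  have ea : pd3 f α = fun q => fderiv ℝ f q α := rfl
  have eb : pd3 f β = fun q => fderiv ℝ f q β := rfl
  show fderiv ℝ (pd3 f α) p β = fderiv ℝ (pd3 f β) p α
  rw [ea, eb, key α, key β]
  simpa using hsym

lemma dot_expand {s u w : V3} (hs : s ⬝ᵥ s = 1) (hu : u ⬝ᵥ u = 1) (hw : w ⬝ᵥ w = 1)
    (hsu : s ⬝ᵥ u = 0) (hsw : s ⬝ᵥ w = 0) (huw : u ⬝ᵥ w = 0) (x y : V3) :
    x ⬝ᵥ y = (x ⬝ᵥ s) * (y ⬝ᵥ s) + (x ⬝ᵥ u) * (y ⬝ᵥ u) + (x ⬝ᵥ w) * (y ⬝ᵥ w) := by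
  simp only [dotProduct, Fin.sum_univ_three] at hs hu hw hsu hsw huw ⊢
  set M : Matrix (Fin 3) (Fin 3) ℝ := Matrix.of ![s, u, w] with hM
  have h1 : M * Mᵀ = 1 := by
    ext i j
    fin_cases i <;> fin_cases j <;>
      simp [hM, Matrix.mul_apply, Matrix.one_apply, Fin.sum_univ_three,
        Matrix.transpose_apply, Matrix.vecHead, Matrix.vecTail] <;>
      first
        | linear_combination hs
        | linear_combination hu
        | linear_combination hw
        | linear_combination hsu
        | linear_combination hsw
        | linear_combination huw
  have h2 : Mᵀ * M = 1 := mul_eq_one_comm.mp h1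
  have hk : ∀ i j : Fin 3, s i * s j + u i * u j + w i * w j
      = if i = j then (1:ℝ) else 0 := by
    intro i j
    have := congrFun (congrFun h2 i) j
    simpa [hM, Matrix.mul_apply, Fin.sum_univ_three, Matrix.one_apply,
      Matrix.transpose_apply] using this
  have h00 := hk 0 0; have h01 := hk 0 1; have h02 := hk 0 2
  have h11 := hk 1 1; have h12 := hk 1 2; have h22 := hk 2 2
  have h10 := hk 1 0; have h20 := hk 2 0; have h21 := hk 2 1
  norm_num [Fin.ext_iff] at h00 h01 h02 h11 h12 h22 h10 h20 h21
  linear_combination -(x 0 * y 0 * h00)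
    - x 0 * y 1 * h01 - x 0 * y 2 * h02
    - x 1 * y 0 * h10 - x 1 * y 1 * h11 - x 1 * y 2 * h12
    - x 2 * y 0 * h20 - x 2 * y 1 * h21 - x 2 * y 2 * h22

end CSIaux
namespace CSIaux

lemma cross_dot_cross' (a b c d : V3) :
    (crossProduct a b) ⬝ᵥ (crossProduct c d) = (a ⬝ᵥ c) * (b ⬝ᵥ d) - (a ⬝ᵥ d) * (b ⬝ᵥ c) := by
  simp [crossProduct, dotProduct, Fin.sum_univ_three]
  ring

lemma dot_cross_left (a b x : V3) :
    b ⬝ᵥ (crossProduct a x) = -((crossProduct a b) ⬝ᵥ x) := by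
  simp [crossProduct, dotProduct, Fin.sum_univ_three]
  ring

lemma contDiff_cross {n : WithTop ℕ∞} {f g : E3 → V3} (hf : ContDiff ℝ n f)
    (hg : ContDiff ℝ n g) : ContDiff ℝ n (fun q => crossProduct (f q) (g q)) := by
  rw [contDiff_pi]
  intro i
  fin_cases i <;> simp [crossProduct] <;>
    exact ((contDiff_coord hf _).mul (contDiff_coord hg _)).sub
      ((contDiff_coord hf _).mul (contDiff_coord hg _))

end CSIaux

open CSIaux in
/-- For a solution of the Ishimori evolution equation, `ψ_m` (`m = 1, 2`) satisfies the
covariant hyperbolic Schrödinger equation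
`i D_t ψ_m = −(D₁D₁ψ_m − D₂D₂ψ_m) − i(q_{m1}ψ₁ − q_{m2}ψ₂)
  + iκ(∂₁φ D_mψ₁ + ∂₂φ D_mψ₂ + ψ₁ ∂_m∂₁φ + ψ₂ ∂_m∂₂φ)`. -/
theorem covariant_schrodinger_ishimori
    (S v : ℝ × ℝ × ℝ → Fin 3 → ℝ)
    (hS : ContDiff ℝ 3 S) (hv : ContDiff ℝ 3 v)
    (hS1 : ∀ p, S p ⬝ᵥ S p = 1) (hv1 : ∀ p, v p ⬝ᵥ v p = 1)
    (hSv : ∀ p, S p ⬝ᵥ v p = 0)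
    (w : ℝ × ℝ × ℝ → Fin 3 → ℝ) (hw : ∀ p, w p = crossProduct (S p) (v p))
    (φ : ℝ × ℝ × ℝ → ℝ) (hφ : ContDiff ℝ 2 φ) (κ : ℝ)
    (hIshimori : ∀ p : ℝ × ℝ × ℝ,
      pd3 S et p =
        crossProduct (S p) (pd3 (pd3 S e1) e1 p - pd3 (pd3 S e2) e2 p) +
          κ • ((fderiv ℝ φ p e1) • pd3 S e1 p + (fderiv ℝ φ p e2) • pd3 S e2 p)) :
    ∀ em ∈ ({e1, e2} : Set (ℝ × ℝ × ℝ)), ∀ p : ℝ × ℝ × ℝ,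
      Complex.I * Dcov (frameA v w et) (framePsi S v w em) et p =
        -(Dcov (frameA v w e1) (fun q => Dcov (frameA v w e1) (framePsi S v w em) e1 q) e1 p
            - Dcov (frameA v w e2) (fun q => Dcov (frameA v w e2) (framePsi S v w em) e2 q) e2 p)
          - Complex.I * (((frameQ S v w em e1 p : ℝ) : ℂ) * framePsi S v w e1 p
            - ((frameQ S v w em e2 p : ℝ) : ℂ) * framePsi S v w e2 p)
          + Complex.I * (κ : ℂ) *
            (((fderiv ℝ φ p e1 : ℝ) : ℂ) * Dcov (frameA v w em) (framePsi S v w e1) em p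
              + ((fderiv ℝ φ p e2 : ℝ) : ℂ) * Dcov (frameA v w em) (framePsi S v w e2) em p
              + framePsi S v w e1 p * ((pd3 (pd3 φ e1) em p : ℝ) : ℂ)
              + framePsi S v w e2 p * ((pd3 (pd3 φ e2) em p : ℝ) : ℂ)) := by
  intro em _hem p
  -- regularity facts
  have hSd : Differentiable ℝ S := hS.differentiable (by norm_num)
  have hvd : Differentiable ℝ v := hv.differentiable (by norm_num)
  have hw_eq : w = fun q => crossProduct (S q) (v q) := funext hw
  have hw3 : ContDiff ℝ 3 w := by rw [hw_eq]; exact contDiff_cross hS hv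
  have hwd : Differentiable ℝ w := hw3.differentiable (by norm_num)
  have hS2c : ContDiff ℝ 2 S := hS.of_le (by norm_num)
  have hv2c : ContDiff ℝ 2 v := hv.of_le (by norm_num)
  have hw2c : ContDiff ℝ 2 w := hw3.of_le (by norm_num)
  have hdS2 : ∀ α : E3, ContDiff ℝ 2 (pd3 S α) := fun α => contDiff_pd3 hS (by norm_num) α
  have hdv2 : ∀ α : E3, ContDiff ℝ 2 (pd3 v α) := fun α => contDiff_pd3 hv (by norm_num) α
  have hdSd : ∀ α : E3, Differentiable ℝ (pd3 S α) := fun α => (hdS2 α).differentiable (by norm_num)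
  have hdvd : ∀ α : E3, Differentiable ℝ (pd3 v α) := fun α => (hdv2 α).differentiable (by norm_num)
  have ha2 : ∀ α : E3, ContDiff ℝ 2 (fun q => v q ⬝ᵥ pd3 S α q) :=
    fun α => contDiff_dot hv2c (hdS2 α)
  have hb2 : ∀ α : E3, ContDiff ℝ 2 (fun q => w q ⬝ᵥ pd3 S α q) :=
    fun α => contDiff_dot hw2c (hdS2 α)
  have hA2 : ∀ α : E3, ContDiff ℝ 2 (frameA v w α) :=
    fun α => contDiff_dot hw2c (hdv2 α)
  have hψ_eq : ∀ α : E3, framePsi S v w α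
      = fun q => (((v q ⬝ᵥ pd3 S α q : ℝ) : ℂ) + Complex.I * ((w q ⬝ᵥ pd3 S α q : ℝ) : ℂ)) :=
    fun α => rfl
  have hψ2 : ∀ α : E3, ContDiff ℝ 2 (framePsi S v w α) := by
    intro α
    rw [hψ_eq α]
    exact (contDiff_ofReal (ha2 α)).add (contDiff_const.mul (contDiff_ofReal (hb2 α)))
  have hψd : ∀ α : E3, Differentiable ℝ (framePsi S v w α) :=
    fun α => (hψ2 α).differentiable (by norm_num)
  have hdψd : ∀ α β : E3, Differentiable ℝ (pd3 (framePsi S v w α) β) :=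
    fun α β => (contDiff_pd3 (hψ2 α) (by norm_num) β (m := 1)).differentiable (by norm_num)
  have hdφ1 : ∀ α : E3, ContDiff ℝ 1 (pd3 φ α) := fun α => contDiff_pd3 hφ (by norm_num) α
  -- pointwise frame dot products
  have hw1 : ∀ q, w q ⬝ᵥ w q = 1 := by
    intro q; rw [hw q, cross_dot_cross', hS1 q, hv1 q, hSv q]; ring
  have hSw0 : ∀ q, S q ⬝ᵥ w q = 0 := fun q => by rw [hw q]; exact dot_self_cross _ _
  have hvw0 : ∀ q, v q ⬝ᵥ w q = 0 := fun q => by rw [hw q]; exact dot_cross_self _ _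
  -- differentiating the constant dot products
  have dconst : ∀ (f g : E3 → V3), Differentiable ℝ f → Differentiable ℝ g →
      ∀ (c : ℝ), (∀ q, f q ⬝ᵥ g q = c) →
      ∀ (α p : E3), pd3 f α p ⬝ᵥ g p + f p ⬝ᵥ pd3 g α p = 0 := by
    intro f g hf hg c hc α p
    have h0 : pd3 (fun q => f q ⬝ᵥ g q) α p = 0 := by
      rw [show (fun q => f q ⬝ᵥ g q) = fun _ => c from funext hc]
      simp [pd3]
    rwa [pd3_dot (hf p) (hg p)] at h0
  have dSS : ∀ α p, S p ⬝ᵥ pd3 S α p = 0 := by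
    intro α p
    have h := dconst S S hSd hSd 1 hS1 α p
    have hc := dotProduct_comm (pd3 S α p) (S p)
    linarith
  have dvv : ∀ α p, v p ⬝ᵥ pd3 v α p = 0 := by
    intro α p
    have h := dconst v v hvd hvd 1 hv1 α p
    have hc := dotProduct_comm (pd3 v α p) (v p)
    linarith
  have dww : ∀ α p, w p ⬝ᵥ pd3 w α p = 0 := by
    intro α p
    have h := dconst w w hwd hwd 1 hw1 α p
    have hc := dotProduct_comm (pd3 w α p) (w p)
    linarith
  have dSv : ∀ α p, S p ⬝ᵥ pd3 v α p = -(v p ⬝ᵥ pd3 S α p) := by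
    intro α p
    have h := dconst S v hSd hvd 0 hSv α p
    have hc := dotProduct_comm (pd3 S α p) (v p)
    linarith
  have dSw : ∀ α p, S p ⬝ᵥ pd3 w α p = -(w p ⬝ᵥ pd3 S α p) := by
    intro α p
    have h := dconst S w hSd hwd 0 hSw0 α p
    have hc := dotProduct_comm (pd3 S α p) (w p)
    linarith
  have dvw : ∀ α p, v p ⬝ᵥ pd3 w α p = -(w p ⬝ᵥ pd3 v α p) := by
    intro α p
    have h := dconst v w hvd hwd 0 hvw0 α p
    have hc := dotProduct_comm (pd3 v α p) (w p)
    linarith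
  -- expansion in the orthonormal frame
  have dexp : ∀ (x y : V3) (p : E3), x ⬝ᵥ y
      = (x ⬝ᵥ S p) * (y ⬝ᵥ S p) + (x ⬝ᵥ v p) * (y ⬝ᵥ v p) + (x ⬝ᵥ w p) * (y ⬝ᵥ w p) :=
    fun x y p => dot_expand (hS1 p) (hv1 p) (hw1 p) (hSv p) (hSw0 p) (hvw0 p) x y
  have d_vS : ∀ α β p, pd3 v β p ⬝ᵥ pd3 S α p
      = (w p ⬝ᵥ pd3 v β p) * (w p ⬝ᵥ pd3 S α p) := by
    intro α β p
    rw [dexp (pd3 v β p) (pd3 S α p) p,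
      dotProduct_comm (pd3 v β p) (S p), dSv β p,
      dotProduct_comm (pd3 S α p) (S p), dSS α p,
      dotProduct_comm (pd3 v β p) (v p), dvv β p,
      dotProduct_comm (pd3 v β p) (w p), dotProduct_comm (pd3 S α p) (w p)]
    ring
  have d_wS : ∀ α β p, pd3 w β p ⬝ᵥ pd3 S α p
      = -((w p ⬝ᵥ pd3 v β p) * (v p ⬝ᵥ pd3 S α p)) := by
    intro α β p
    rw [dexp (pd3 w β p) (pd3 S α p) p,
      dotProduct_comm (pd3 w β p) (S p), dSw β p,
      dotProduct_comm (pd3 S α p) (S p), dSS α p,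
      dotProduct_comm (pd3 w β p) (v p), dvw β p,
      dotProduct_comm (pd3 S α p) (v p),
      dotProduct_comm (pd3 w β p) (w p), dww β p]
    ring
  have d_wv : ∀ α β p, pd3 w β p ⬝ᵥ pd3 v α p
      = (v p ⬝ᵥ pd3 S α p) * (w p ⬝ᵥ pd3 S β p) := by
    intro α β p
    rw [dexp (pd3 w β p) (pd3 v α p) p,
      dotProduct_comm (pd3 w β p) (S p), dSw β p,
      dotProduct_comm (pd3 v α p) (S p), dSv α p,
      dotProduct_comm (pd3 w β p) (v p), dvw β p,
      dotProduct_comm (pd3 v α p) (v p), dvv α p,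
      dotProduct_comm (pd3 w β p) (w p), dww β p]
    ring
  -- first derivatives of the frame coefficients
  have hda : ∀ α β p, pd3 (fun q => v q ⬝ᵥ pd3 S α q) β p
      = (w p ⬝ᵥ pd3 v β p) * (w p ⬝ᵥ pd3 S α p) + v p ⬝ᵥ pd3 (pd3 S α) β p := by
    intro α β p
    rw [pd3_dot (hvd p) (hdSd α p) β, d_vS α β p]
  have hdb : ∀ α β p, pd3 (fun q => w q ⬝ᵥ pd3 S α q) β p
      = -((w p ⬝ᵥ pd3 v β p) * (v p ⬝ᵥ pd3 S α p)) + w p ⬝ᵥ pd3 (pd3 S α) β p := by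
    intro α β p
    rw [pd3_dot (hwd p) (hdSd α p) β, d_wS α β p]
  have hdA : ∀ α β p, pd3 (frameA v w α) β p
      = (v p ⬝ᵥ pd3 S α p) * (w p ⬝ᵥ pd3 S β p) + w p ⬝ᵥ pd3 (pd3 v α) β p := by
    intro α β p
    rw [show frameA v w α = fun q => w q ⬝ᵥ pd3 v α q from rfl,
      pd3_dot (hwd p) (hdvd α p) β, d_wv α β p]
  -- derivative of ψ
  have pd3ψ : ∀ α β p, pd3 (framePsi S v w α) β p
      = ((pd3 (fun q => v q ⬝ᵥ pd3 S α q) β p : ℝ) : ℂ)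
        + Complex.I * ((pd3 (fun q => w q ⬝ᵥ pd3 S α q) β p : ℝ) : ℂ) := by
    intro α β p
    rw [hψ_eq α,
      pd3_add ((contDiff_ofReal (ha2 α)).differentiable (by norm_num) p)
        ((contDiff_const.mul (contDiff_ofReal (hb2 α))).differentiable (by norm_num) p) β,
      pd3_cmul ((contDiff_ofReal (hb2 α)).differentiable (by norm_num) p) Complex.I β,
      pd3_ofReal ((ha2 α).differentiable (by norm_num) p) β,
      pd3_ofReal ((hb2 α).differentiable (by norm_num) p) β]
  have hDψ : ∀ α β p, pd3 (framePsi S v w α) β p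
        + Complex.I * ((frameA v w β p : ℝ) : ℂ) * framePsi S v w α p
      = ((v p ⬝ᵥ pd3 (pd3 S α) β p : ℝ) : ℂ)
        + Complex.I * ((w p ⬝ᵥ pd3 (pd3 S α) β p : ℝ) : ℂ) := by
    intro α β p
    rw [pd3ψ α β p, hda α β p, hdb α β p,
      show framePsi S v w α p = ((v p ⬝ᵥ pd3 S α p : ℝ) : ℂ)
        + Complex.I * ((w p ⬝ᵥ pd3 S α p : ℝ) : ℂ) from rfl,
      show frameA v w β p = w p ⬝ᵥ pd3 v β p from rfl]
    push_cast
    linear_combination (((w p ⬝ᵥ pd3 v β p : ℝ) : ℂ) * ((w p ⬝ᵥ pd3 S α p : ℝ) : ℂ)) * Complex.I_sq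
  have hDsym : ∀ α β p, pd3 (framePsi S v w α) β p
        + Complex.I * ((frameA v w β p : ℝ) : ℂ) * framePsi S v w α p
      = pd3 (framePsi S v w β) α p
        + Complex.I * ((frameA v w α p : ℝ) : ℂ) * framePsi S v w β p := by
    intro α β p
    rw [hDψ α β p, hDψ β α p, pd3_pd3_comm hS2c α β p]
  -- the evolution equation for ψ_t
  have hψt : ∀ p, framePsi S v w et p
      = Complex.I * ((pd3 (framePsi S v w e1) e1 p
            + Complex.I * ((frameA v w e1 p : ℝ) : ℂ) * framePsi S v w e1 p)
          - (pd3 (framePsi S v w e2) e2 p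
            + Complex.I * ((frameA v w e2 p : ℝ) : ℂ) * framePsi S v w e2 p))
        + (κ : ℂ) * (((pd3 φ e1 p : ℝ) : ℂ) * framePsi S v w e1 p
          + ((pd3 φ e2 p : ℝ) : ℂ) * framePsi S v w e2 p) := by
    intro p
    have hcross1 : ∀ x, v p ⬝ᵥ crossProduct (S p) x = -(w p ⬝ᵥ x) := by
      intro x; rw [dot_cross_left, ← hw p]
    have hcross2 : ∀ x, w p ⬝ᵥ crossProduct (S p) x = v p ⬝ᵥ x := by
      intro x; rw [hw p, cross_dot_cross', hS1 p, dotProduct_comm (v p) (S p), hSv p]; ring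
    have hat : v p ⬝ᵥ pd3 S et p
        = -(w p ⬝ᵥ pd3 (pd3 S e1) e1 p) + (w p ⬝ᵥ pd3 (pd3 S e2) e2 p)
          + κ * (pd3 φ e1 p * (v p ⬝ᵥ pd3 S e1 p) + pd3 φ e2 p * (v p ⬝ᵥ pd3 S e2 p)) := by
      rw [hIshimori p, dotProduct_add, hcross1]
      simp only [dotProduct_smul, dotProduct_add, dotProduct_sub, smul_eq_mul,
        show fderiv ℝ φ p e1 = pd3 φ e1 p from rfl,
        show fderiv ℝ φ p e2 = pd3 φ e2 p from rfl]
      ring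
    have hbt : w p ⬝ᵥ pd3 S et p
        = (v p ⬝ᵥ pd3 (pd3 S e1) e1 p) - (v p ⬝ᵥ pd3 (pd3 S e2) e2 p)
          + κ * (pd3 φ e1 p * (w p ⬝ᵥ pd3 S e1 p) + pd3 φ e2 p * (w p ⬝ᵥ pd3 S e2 p)) := by
      rw [hIshimori p, dotProduct_add, hcross2]
      simp only [dotProduct_smul, dotProduct_add, dotProduct_sub, smul_eq_mul,
        show fderiv ℝ φ p e1 = pd3 φ e1 p from rfl,
        show fderiv ℝ φ p e2 = pd3 φ e2 p from rfl]
      try ring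
    rw [hDψ e1 e1 p, hDψ e2 e2 p,
      show framePsi S v w et p = ((v p ⬝ᵥ pd3 S et p : ℝ) : ℂ)
        + Complex.I * ((w p ⬝ᵥ pd3 S et p : ℝ) : ℂ) from rfl,
      show framePsi S v w e1 p = ((v p ⬝ᵥ pd3 S e1 p : ℝ) : ℂ)
        + Complex.I * ((w p ⬝ᵥ pd3 S e1 p : ℝ) : ℂ) from rfl,
      show framePsi S v w e2 p = ((v p ⬝ᵥ pd3 S e2 p : ℝ) : ℂ)
        + Complex.I * ((w p ⬝ᵥ pd3 S e2 p : ℝ) : ℂ) from rfl,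
      hat, hbt]
    push_cast
    linear_combination (-(((w p ⬝ᵥ pd3 (pd3 S e1) e1 p : ℝ) : ℂ))
      + ((w p ⬝ᵥ pd3 (pd3 S e2) e2 p : ℝ) : ℂ)) * Complex.I_sq
  -- curvature
  have hQc : ∀ α β p, frameQ S v w α β p
      = (w p ⬝ᵥ pd3 S α p) * (v p ⬝ᵥ pd3 S β p)
        - (v p ⬝ᵥ pd3 S α p) * (w p ⬝ᵥ pd3 S β p) := by
    intro α β p
    simp only [frameQ, framePsi, map_add, _root_.map_mul, Complex.conj_I, Complex.conj_ofReal]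
    simp [Complex.add_im, Complex.mul_im, Complex.mul_re, Complex.add_re,
      Complex.I_re, Complex.I_im, Complex.ofReal_re, Complex.ofReal_im]
    ring
  have hAQ : ∀ α β p, pd3 (frameA v w α) β p
      = pd3 (frameA v w β) α p + frameQ S v w β α p := by
    intro α β p
    rw [hdA α β p, hdA β α p, hQc β α p, pd3_pd3_comm hv2c α β p]
    ring
  -- product / covariant derivative expansion lemmas
  have hDer : ∀ α β γ δ p, pd3 (fun q => pd3 (framePsi S v w α) β q
        + Complex.I * ((frameA v w γ q : ℝ) : ℂ) * framePsi S v w α q) δ p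
      = pd3 (pd3 (framePsi S v w α) β) δ p
        + Complex.I * ((frameA v w γ p : ℝ) : ℂ) * pd3 (framePsi S v w α) δ p
        + framePsi S v w α p * (Complex.I * ((pd3 (frameA v w γ) δ p : ℝ) : ℂ)) := by
    intro α β γ δ p
    have hIA : DifferentiableAt ℝ (fun q => Complex.I * ((frameA v w γ q : ℝ) : ℂ)) p :=
      (((contDiff_ofReal (hA2 γ)).differentiable (by norm_num)) p).const_mul Complex.I
    rw [pd3_add (hdψd α β p) (hIA.fun_mul (hψd α p)) δ,
      pd3_mul hIA (hψd α p) δ,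
      pd3_cmul (((contDiff_ofReal (hA2 γ)).differentiable (by norm_num)) p) Complex.I δ,
      pd3_ofReal (((hA2 γ).differentiable (by norm_num)) p) δ]
    ring
  have hφψ : ∀ γ δ p, pd3 (fun q => ((pd3 φ γ q : ℝ) : ℂ) * framePsi S v w γ q) δ p
      = ((pd3 φ γ p : ℝ) : ℂ) * pd3 (framePsi S v w γ) δ p
        + framePsi S v w γ p * ((pd3 (pd3 φ γ) δ p : ℝ) : ℂ) := by
    intro γ δ p
    rw [pd3_mul (((contDiff_ofReal (hdφ1 γ)).differentiable (by norm_num)) p) (hψd γ p) δ,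
      pd3_ofReal (((hdφ1 γ).differentiable (by norm_num)) p) δ]
  -- derivative of the ψ_t equation in the direction em
  have hψtfun : framePsi S v w et
      = fun q => Complex.I * ((pd3 (framePsi S v w e1) e1 q
            + Complex.I * ((frameA v w e1 q : ℝ) : ℂ) * framePsi S v w e1 q)
          - (pd3 (framePsi S v w e2) e2 q
            + Complex.I * ((frameA v w e2 q : ℝ) : ℂ) * framePsi S v w e2 q))
        + (κ : ℂ) * (((pd3 φ e1 q : ℝ) : ℂ) * framePsi S v w e1 q
          + ((pd3 φ e2 q : ℝ) : ℂ) * framePsi S v w e2 q) := funext hψt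
  have hG : ∀ j : E3, DifferentiableAt ℝ (fun q => pd3 (framePsi S v w j) j q
      + Complex.I * ((frameA v w j q : ℝ) : ℂ) * framePsi S v w j q) p := by
    intro j
    exact (hdψd j j p).add
      (((((contDiff_ofReal (hA2 j)).differentiable (by norm_num)) p).const_mul Complex.I).mul
        (hψd j p))
  have hK : ∀ j : E3, DifferentiableAt ℝ
      (fun q => ((pd3 φ j q : ℝ) : ℂ) * framePsi S v w j q) p :=
    fun j => (((contDiff_ofReal (hdφ1 j)).differentiable (by norm_num)) p).mul (hψd j p)
  have hdψt : pd3 (framePsi S v w et) em p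
      = Complex.I * ((pd3 (pd3 (framePsi S v w e1) e1) em p
            + Complex.I * ((frameA v w e1 p : ℝ) : ℂ) * pd3 (framePsi S v w e1) em p
            + framePsi S v w e1 p * (Complex.I * ((pd3 (frameA v w e1) em p : ℝ) : ℂ)))
          - (pd3 (pd3 (framePsi S v w e2) e2) em p
            + Complex.I * ((frameA v w e2 p : ℝ) : ℂ) * pd3 (framePsi S v w e2) em p
            + framePsi S v w e2 p * (Complex.I * ((pd3 (frameA v w e2) em p : ℝ) : ℂ))))
        + (κ : ℂ) * ((((pd3 φ e1 p : ℝ) : ℂ) * pd3 (framePsi S v w e1) em p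
            + framePsi S v w e1 p * ((pd3 (pd3 φ e1) em p : ℝ) : ℂ))
          + (((pd3 φ e2 p : ℝ) : ℂ) * pd3 (framePsi S v w e2) em p
            + framePsi S v w e2 p * ((pd3 (pd3 φ e2) em p : ℝ) : ℂ))) := by
    rw [hψtfun,
      pd3_add (((hG e1).fun_sub (hG e2)).const_mul Complex.I)
        (((hK e1).fun_add (hK e2)).const_mul (κ : ℂ)) em,
      pd3_cmul ((hG e1).fun_sub (hG e2)) Complex.I em,
      pd3_sub (hG e1) (hG e2) em,
      pd3_cmul ((hK e1).fun_add (hK e2)) (κ : ℂ) em,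
      pd3_add (hK e1) (hK e2) em,
      hDer e1 e1 e1 em p, hDer e2 e2 e2 em p, hφψ e1 em p, hφψ e2 em p]
  -- assembling everything
  have hfun1 : (fun q => pd3 (framePsi S v w em) e1 q
        + Complex.I * ((frameA v w e1 q : ℝ) : ℂ) * framePsi S v w em q)
      = fun q => pd3 (framePsi S v w e1) em q
        + Complex.I * ((frameA v w em q : ℝ) : ℂ) * framePsi S v w e1 q :=
    funext fun q => hDsym em e1 q
  have hfun2 : (fun q => pd3 (framePsi S v w em) e2 q
        + Complex.I * ((frameA v w e2 q : ℝ) : ℂ) * framePsi S v w em q)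
      = fun q => pd3 (framePsi S v w e2) em q
        + Complex.I * ((frameA v w em q : ℝ) : ℂ) * framePsi S v w e2 q :=
    funext fun q => hDsym em e2 q
  have hAQc1 : ((pd3 (frameA v w e1) em p : ℝ) : ℂ)
      = ((pd3 (frameA v w em) e1 p : ℝ) : ℂ) + ((frameQ S v w em e1 p : ℝ) : ℂ) := by
    have h := congrArg (fun r : ℝ => (r : ℂ)) (hAQ e1 em p)
    push_cast at h
    exact h
  have hAQc2 : ((pd3 (frameA v w e2) em p : ℝ) : ℂ)
      = ((pd3 (frameA v w em) e2 p : ℝ) : ℂ) + ((frameQ S v w em e2 p : ℝ) : ℂ) := by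
    have h := congrArg (fun r : ℝ => (r : ℂ)) (hAQ e2 em p)
    push_cast at h
    exact h
  have hsymψ1 : pd3 (pd3 (framePsi S v w e1) e1) em p
      = pd3 (pd3 (framePsi S v w e1) em) e1 p := pd3_pd3_comm (hψ2 e1) e1 em p
  have hsymψ2 : pd3 (pd3 (framePsi S v w e2) e2) em p
      = pd3 (pd3 (framePsi S v w e2) em) e2 p := pd3_pd3_comm (hψ2 e2) e2 em p
  simp only [show ∀ (A : E3 → ℝ) (f : E3 → ℂ) (e q : E3),
      Dcov A f e q = pd3 f e q + Complex.I * ((A q : ℝ) : ℂ) * f q from fun _ _ _ _ => rfl,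
    show fderiv ℝ φ p e1 = pd3 φ e1 p from rfl,
    show fderiv ℝ φ p e2 = pd3 φ e2 p from rfl]
  rw [hfun1, hfun2, hDer e1 em em e1 p, hDer e2 em em e2 p, hDsym em et p, hdψt, hψt p,
    hsymψ1, hsymψ2]
  linear_combination
    (Complex.I * ((frameA v w e1 p : ℝ) : ℂ)) * hDsym em e1 p
    - (Complex.I * ((frameA v w e2 p : ℝ) : ℂ)) * hDsym em e2 p
    + (Complex.I ^ 3 * framePsi S v w e1 p) * hAQc1
    + (-(Complex.I ^ 3 * framePsi S v w e2 p)) * hAQc2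
    + (pd3 (pd3 (framePsi S v w e1) em) e1 p
      - pd3 (pd3 (framePsi S v w e2) em) e2 p
      + Complex.I * framePsi S v w e1 p * ((frameQ S v w em e1 p : ℝ) : ℂ)
      + Complex.I * framePsi S v w e1 p * ((pd3 (frameA v w em) e1 p : ℝ) : ℂ)
      - Complex.I * framePsi S v w e2 p * ((frameQ S v w em e2 p : ℝ) : ℂ)
      - Complex.I * framePsi S v w e2 p * ((pd3 (frameA v w em) e2 p : ℝ) : ℂ)
      + Complex.I * ((frameA v w e1 p : ℝ) : ℂ) * pd3 (framePsi S v w e1) em p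
      - Complex.I * ((frameA v w e2 p : ℝ) : ℂ) * pd3 (framePsi S v w e2) em p
      + Complex.I * ((frameA v w em p : ℝ) : ℂ) * pd3 (framePsi S v w e1) e1 p
      - Complex.I * ((frameA v w em p : ℝ) : ℂ) * pd3 (framePsi S v w e2) e2 p
      + Complex.I ^ 2 * framePsi S v w e1 p * ((frameA v w e1 p : ℝ) : ℂ)
          * ((frameA v w em p : ℝ) : ℂ)
      - Complex.I ^ 2 * framePsi S v w e2 p * ((frameA v w e2 p : ℝ) : ℂ)
          * ((frameA v w em p : ℝ) : ℂ)) * Complex.I_sq
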